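/- arXiv:1409.4360 — 2 statements merged into one kernel-verified Lean document; each statement's English description precedes it below -/
import Mathlib

section
/- For the MAJ/AND mixture family with parameter β, the total ρ-biased influence at ρ = δ is I(δ) = 3β(1-δ²)/2 + 3(1-β)(1-δ)²/4. If β > 2/3 and δ* = 3(1-β)/(1-3β), then I(δ*) > 1. -/
open Finset

noncomputable section

/-- ±1 encoding of a Boolean value: `true ↦ 1`, `false ↦ -1`. -/
def pm (b : Bool) : ℝ := if b then 1 else -1

/-- The point of the cube `{-1,+1}^K` corresponding to `b`. -/
def pt {K : ℕ} (b : Fin K → Bool) : Fin K → ℝ := fun i => pm (b i)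

/-- Parity function `χ_S(y) = ∏_{i∈S} y_i`. -/
def chi {K : ℕ} (S : Finset (Fin K)) (y : Fin K → ℝ) : ℝ := ∏ i ∈ S, y i

/-- Fourier coefficient `f̂(S) = 2^{-K} ∑_y f(y) χ_S(y)`. -/
def fourierCoef {K : ℕ} (f : (Fin K → ℝ) → ℝ) (S : Finset (Fin K)) : ℝ :=
  (∑ b : Fin K → Bool, f (pt b) * chi S (pt b)) / 2 ^ K

/-- Probability of the point `b` under the biased product distribution `D_ρ`. -/
def wt {K : ℕ} (ρ : ℝ) (b : Fin K → Bool) : ℝ :=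
  ∏ i, if b i then (1 + ρ) / 2 else (1 - ρ) / 2

/-- Expectation of `g` under `D_ρ`. -/
def Ex {K : ℕ} (ρ : ℝ) (g : (Fin K → ℝ) → ℝ) : ℝ :=
  ∑ b : Fin K → Bool, wt ρ b * g (pt b)

/-- Flip the `i`-th coordinate of `y ∈ {-1,+1}^K`. -/
def flipAt {K : ℕ} (i : Fin K) (y : Fin K → ℝ) : Fin K → ℝ :=
  Function.update y i (-(y i))

/-- ρ-biased influence `Inf_i(f;ρ) = Pr_{y∼D_ρ}[f(y) ≠ f(y^{(i)})]`. -/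
def biasedInf {K : ℕ} (f : (Fin K → ℝ) → ℝ) (i : Fin K) (ρ : ℝ) : ℝ :=
  ∑ b : Fin K → Bool, wt ρ b * (if f (pt b) ≠ f (flipAt i (pt b)) then 1 else 0)

/-- `f` takes values in `{-1,+1}` on the cube. -/
def IsBooleanValued {K : ℕ} (f : (Fin K → ℝ) → ℝ) : Prop :=
  ∀ b : Fin K → Bool, f (pt b) = 1 ∨ f (pt b) = -1

/-- Level-set sum `σ_r(f) = ∑_{|S|=r} f̂(S)`. -/
def levelSum {K : ℕ} (f : (Fin K → ℝ) → ℝ) (r : ℕ) : ℝ :=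
  ∑ S ∈ Finset.univ.filter (fun S : Finset (Fin K) => S.card = r), fourierCoef f S

/-- 3-input majority function `MAJ(y) = sign(y₁+y₂+y₃)`. -/
def MAJ3 : (Fin 3 → ℝ) → ℝ := fun y => if 0 < y 0 + y 1 + y 2 then 1 else -1

/-- 3-input AND (with `-1` = TRUE): outputs `-1` iff all inputs are `-1`. -/
def AND3 : (Fin 3 → ℝ) → ℝ :=
  fun y => if y 0 = -1 ∧ y 1 = -1 ∧ y 2 = -1 then -1 else 1


/-- Enumerating `Fin 3 → Bool` via base-2 digits. -/
def e8 : Fin 8 ≃ (Fin 3 → Bool) :=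
    ((finFunctionFinEquiv (m := 2) (n := 3)).symm.trans
      (Equiv.arrowCongr (Equiv.refl (Fin 3)) finTwoEquiv) : Fin (2^3) ≃ (Fin 3 → Bool))

lemma sum_fn3 (f : (Fin 3 → Bool) → ℝ) :
    ∑ b : Fin 3 → Bool, f b =
      f ![false,false,false] + f ![true,false,false] + f ![false,true,false] + f ![true,true,false]
      + f ![false,false,true] + f ![true,false,true] + f ![false,true,true] + f ![true,true,true] := by
  rw [← e8.sum_comp f, Fin.sum_univ_eight]
  have h : ∀ k : Fin 8, ∀ g : Fin 3 → Bool, (∀ i, e8 k i = g i) → f (e8 k) = f g := by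
    intro k g hg; congr 1; funext i; exact hg i
  refine congrArg₂ _ (congrArg₂ _ (congrArg₂ _ (congrArg₂ _ (congrArg₂ _ (congrArg₂ _
    (congrArg₂ _ ?_ ?_) ?_) ?_) ?_) ?_) ?_) ?_ <;>
    · apply h; decide

lemma maj3_total_inf (δ : ℝ) : ∑ i : Fin 3, biasedInf MAJ3 i δ = 3*(1-δ^2)/2 := by
  simp only [Fin.sum_univ_three, biasedInf, sum_fn3]
  norm_num [MAJ3, pt, pm, flipAt, wt, Fin.prod_univ_three, Function.update, Fin.ext_iff, Matrix.cons_val_two, Matrix.tail_cons, Matrix.head_cons]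
  ring

lemma and3_total_inf (δ : ℝ) : ∑ i : Fin 3, biasedInf AND3 i δ = 3*(1-δ)^2/4 := by
  simp only [Fin.sum_univ_three, biasedInf, sum_fn3]
  norm_num [AND3, pt, pm, flipAt, wt, Fin.prod_univ_three, Function.update, Fin.ext_iff, Matrix.cons_val_two, Matrix.tail_cons, Matrix.head_cons]
  ring

/-- Total biased influence of the MAJ/AND mixture, and its supercriticality at the
nontrivial fixed point when `β > 2/3`. -/
theorem mixture_influence_supercritical (β : ℝ) (hβ₀ : 0 ≤ β) (hβ₁ : β ≤ 1) :
    (∀ δ : ℝ, -1 ≤ δ → δ ≤ 1 →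
      β * ∑ i : Fin 3, biasedInf MAJ3 i δ + (1 - β) * ∑ i : Fin 3, biasedInf AND3 i δ =
        3 * β * (1 - δ ^ 2) / 2 + 3 * (1 - β) * (1 - δ) ^ 2 / 4) ∧
    (2 / 3 < β →
      1 < 3 * β * (1 - (3 * (1 - β) / (1 - 3 * β)) ^ 2) / 2 +
            3 * (1 - β) * (1 - 3 * (1 - β) / (1 - 3 * β)) ^ 2 / 4) := by
  constructor
  · intro δ _ _
    rw [maj3_total_inf, and3_total_inf]
    ring
  · intro hβ
    have hc' : (1 - 3 * β) ≠ 0 := by linarith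
    have key : (3 * β * (1 - (3 * (1 - β) / (1 - 3 * β)) ^ 2) / 2 +
              3 * (1 - β) * (1 - 3 * (1 - β) / (1 - 3 * β)) ^ 2 / 4 - 1) * (1 - 3*β)^2
        = (3*β - 1) * (3*β - 2) := by field_simp; ring
    nlinarith [mul_pos (by linarith : (0:ℝ) < 3*β-1) (by linarith : (0:ℝ) < 3*β-2),
      sq_nonneg (1-3*β)]
end
end

section
/- For a Boolean function f : {-1,+1}^K → {-1,+1} and coordinate i, Inf_i(f;ρ) = Σ_{S∋i} Σ_{T∋i} f̂(S) f̂(T) ρ^{|S Δ T|}, where S Δ T is the symmetric difference. In particular, Inf_i(f;0) = Σ_{S∋i} f̂(S)². -/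
open Finset

noncomputable section

lemma pm_mul_self (x : Bool) : pm x * pm x = 1 := by cases x <;> norm_num [pm]

lemma chi_pt_mul {K : ℕ} (S T : Finset (Fin K)) (b : Fin K → Bool) :
    chi S (pt b) * chi T (pt b) = chi (symmDiff S T) (pt b) := by
  classical
  have hS : chi S (pt b) = chi (S \ T) (pt b) * chi (S ∩ T) (pt b) := by
    rw [chi, chi, chi, ← Finset.prod_union (Finset.disjoint_sdiff_inter S T),
      Finset.sdiff_union_inter]
  have hT : chi T (pt b) = chi (T \ S) (pt b) * chi (S ∩ T) (pt b) := by
    rw [chi, chi, chi, Finset.inter_comm S T,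
      ← Finset.prod_union (Finset.disjoint_sdiff_inter T S), Finset.sdiff_union_inter]
  have hsq : chi (S ∩ T) (pt b) * chi (S ∩ T) (pt b) = 1 := by
    rw [chi, ← Finset.prod_mul_distrib]
    exact Finset.prod_eq_one fun j _ => pm_mul_self (b j)
  have hsd : chi (symmDiff S T) (pt b) = chi (S \ T) (pt b) * chi (T \ S) (pt b) := by
    rw [symmDiff_def, Finset.sup_eq_union, chi, Finset.prod_union disjoint_sdiff_sdiff]
    rfl
  rw [hS, hT, hsd, mul_mul_mul_comm, hsq, mul_one]

lemma sum_wt_chi {K : ℕ} (ρ : ℝ) (U : Finset (Fin K)) :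
    ∑ b : Fin K → Bool, wt ρ b * chi U (pt b) = ρ ^ U.card := by
  classical
  have h1 : ∀ b : Fin K → Bool, wt ρ b * chi U (pt b) =
      ∏ j, ((if b j then (1 + ρ) / 2 else (1 - ρ) / 2) * (if j ∈ U then pm (b j) else 1)) := by
    intro b
    rw [Finset.prod_mul_distrib, wt]
    congr 1
    rw [Finset.prod_ite_mem, Finset.univ_inter]
    rfl
  simp only [h1]
  rw [← Fintype.prod_sum
    (fun (j : Fin K) (x : Bool) =>
      (if x then (1 + ρ) / 2 else (1 - ρ) / 2) * (if j ∈ U then pm x else 1))]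
  have h2 : ∀ j : Fin K,
      (∑ x : Bool, (if x then (1 + ρ) / 2 else (1 - ρ) / 2) * (if j ∈ U then pm x else 1))
        = if j ∈ U then ρ else 1 := by
    intro j
    rw [Fintype.sum_bool]
    by_cases h : j ∈ U <;> simp [h, pm] <;> ring
  simp only [h2]
  rw [Finset.prod_ite_mem, Finset.univ_inter, Finset.prod_const]

lemma sum_chi_mul {K : ℕ} (b c : Fin K → Bool) :
    ∑ S : Finset (Fin K), chi S (pt b) * chi S (pt c) = if b = c then (2:ℝ) ^ K else 0 := by
  classical
  have h1 : ∀ S : Finset (Fin K), chi S (pt b) * chi S (pt c)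
      = ∏ j ∈ S, (pm (b j) * pm (c j)) := by
    intro S; rw [chi, chi, ← Finset.prod_mul_distrib]; rfl
  simp only [h1]
  have hall : ∑ S : Finset (Fin K), ∏ j ∈ S, (pm (b j) * pm (c j))
      = ∏ j, (pm (b j) * pm (c j) + 1) := by
    rw [Finset.prod_add]
    simp [← Finset.powerset_univ]
  rw [hall]
  by_cases h : b = c
  · subst h
    rw [if_pos rfl]
    have : ∀ j : Fin K, pm (b j) * pm (b j) + 1 = 2 := fun j => by rw [pm_mul_self]; norm_num
    simp only [this]
    simp
  · rw [if_neg h]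
    obtain ⟨j, hj⟩ := Function.ne_iff.mp h
    apply Finset.prod_eq_zero (Finset.mem_univ j)
    cases hb : b j <;> cases hc : c j <;> simp_all [pm]

lemma fourier_inversion {K : ℕ} (f : (Fin K → ℝ) → ℝ) (b : Fin K → Bool) :
    ∑ S : Finset (Fin K), fourierCoef f S * chi S (pt b) = f (pt b) := by
  classical
  have h2K : (2:ℝ) ^ K ≠ 0 := by positivity
  have step : ∑ S : Finset (Fin K), fourierCoef f S * chi S (pt b)
      = (∑ c : Fin K → Bool, ∑ S : Finset (Fin K), f (pt c) * chi S (pt c) * chi S (pt b))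
        / 2 ^ K := by
    rw [Finset.sum_comm, Finset.sum_div]
    refine Finset.sum_congr rfl fun S _ => ?_
    rw [fourierCoef, div_mul_eq_mul_div, Finset.sum_mul]
  rw [step]
  have h3 : ∀ c : Fin K → Bool, ∑ S : Finset (Fin K), f (pt c) * chi S (pt c) * chi S (pt b)
      = f (pt c) * (if c = b then (2:ℝ) ^ K else 0) := by
    intro c
    simp_rw [mul_assoc]
    rw [← Finset.mul_sum, sum_chi_mul]
  simp only [h3, mul_ite, mul_zero]
  rw [Finset.sum_ite_eq' Finset.univ b fun c => f (pt c) * 2 ^ K, if_pos (Finset.mem_univ b),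
    mul_div_assoc, div_self h2K, mul_one]

lemma flip_pt {K : ℕ} (i : Fin K) (b : Fin K → Bool) :
    flipAt i (pt b) = pt (Function.update b i (!b i)) := by
  funext j
  by_cases h : j = i
  · subst h
    simp only [flipAt, pt, Function.update_self]
    cases b j <;> simp [pm]
  · simp [flipAt, pt, Function.update_of_ne h]

lemma chi_flip {K : ℕ} (i : Fin K) (S : Finset (Fin K)) (b : Fin K → Bool) :
    chi S (flipAt i (pt b)) = (if i ∈ S then -1 else 1) * chi S (pt b) := by
  classical
  by_cases h : i ∈ S
  · rw [if_pos h, chi, chi, ← Finset.prod_erase_mul S _ h, ← Finset.prod_erase_mul S _ h]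
    have he : ∀ j ∈ S.erase i, flipAt i (pt b) j = pt b j := fun j hj => by
      simp [flipAt, Function.update_of_ne (Finset.ne_of_mem_erase hj)]
    rw [Finset.prod_congr rfl he]
    have : flipAt i (pt b) i = -(pt b i) := by simp [flipAt]
    rw [this]; ring
  · rw [if_neg h, one_mul, chi, chi]
    refine Finset.prod_congr rfl fun j hj => ?_
    have hji : j ≠ i := fun e => h (e ▸ hj)
    simp [flipAt, pt, Function.update_of_ne hji]

lemma diff_expand {K : ℕ} (f : (Fin K → ℝ) → ℝ) (i : Fin K) (b : Fin K → Bool) :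
    f (pt b) - f (flipAt i (pt b))
      = 2 * ∑ S ∈ Finset.univ.filter (fun S : Finset (Fin K) => i ∈ S),
          fourierCoef f S * chi S (pt b) := by
  classical
  have h2 : f (flipAt i (pt b))
      = ∑ S : Finset (Fin K), fourierCoef f S * ((if i ∈ S then -1 else 1) * chi S (pt b)) := by
    conv_lhs => rw [flip_pt i b, ← fourier_inversion f (Function.update b i (!b i))]
    refine Finset.sum_congr rfl fun S _ => ?_
    rw [← chi_flip, flip_pt]
  rw [← fourier_inversion f b, h2, ← Finset.sum_sub_distrib]
  have h4 : ∀ S : Finset (Fin K),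
      fourierCoef f S * chi S (pt b)
        - fourierCoef f S * ((if i ∈ S then -1 else 1) * chi S (pt b))
      = if i ∈ S then 2 * (fourierCoef f S * chi S (pt b)) else 0 := by
    intro S
    by_cases h : i ∈ S <;> simp [h] <;> ring
  simp only [h4]
  rw [Finset.mul_sum, Finset.sum_filter]

lemma indicator_eq {K : ℕ} (f : (Fin K → ℝ) → ℝ) (hf : IsBooleanValued f) (i : Fin K)
    (b : Fin K → Bool) :
    (if f (pt b) ≠ f (flipAt i (pt b)) then (1:ℝ) else 0)
      = ((f (pt b) - f (flipAt i (pt b))) / 2) ^ 2 := by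
  have h1 := hf b
  have h2 : f (flipAt i (pt b)) = 1 ∨ f (flipAt i (pt b)) = -1 := by
    rw [flip_pt]; exact hf _
  rcases h1 with h1 | h1 <;> rcases h2 with h2 | h2 <;> rw [h1, h2] <;> norm_num

lemma sum_wt_mul_chi {K : ℕ} (ρ c : ℝ) (U : Finset (Fin K)) :
    ∑ b : Fin K → Bool, wt ρ b * (c * chi U (pt b)) = c * ρ ^ U.card := by
  calc ∑ b : Fin K → Bool, wt ρ b * (c * chi U (pt b))
      = c * ∑ b : Fin K → Bool, wt ρ b * chi U (pt b) := by
        rw [Finset.mul_sum]; exact Finset.sum_congr rfl fun b _ => by ring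
    _ = c * ρ ^ U.card := by rw [sum_wt_chi]

/-- The biased influence as a double Fourier sum over sets containing `i`, weighted by
`ρ` to the symmetric difference; in particular the unbiased influence is the sum of
squared coefficients of sets containing `i`. -/
theorem biasedInf_fourier_formula {K : ℕ} (f : (Fin K → ℝ) → ℝ)
    (hf : IsBooleanValued f) (i : Fin K) :
    (∀ ρ : ℝ, -1 ≤ ρ → ρ ≤ 1 →
      biasedInf f i ρ =
        ∑ S ∈ Finset.univ.filter (fun S : Finset (Fin K) => i ∈ S),
          ∑ T ∈ Finset.univ.filter (fun T : Finset (Fin K) => i ∈ T),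
            fourierCoef f S * fourierCoef f T * ρ ^ (symmDiff S T).card) ∧
    biasedInf f i 0 =
      ∑ S ∈ Finset.univ.filter (fun S : Finset (Fin K) => i ∈ S), fourierCoef f S ^ 2 := by
  classical
  set Fi := Finset.univ.filter (fun S : Finset (Fin K) => i ∈ S) with hFi
  have key : ∀ ρ : ℝ, biasedInf f i ρ
      = ∑ S ∈ Fi, ∑ T ∈ Fi,
          fourierCoef f S * fourierCoef f T * ρ ^ (symmDiff S T).card := by
    intro ρ
    rw [biasedInf]
    have hb : ∀ b : Fin K → Bool,
        (if f (pt b) ≠ f (flipAt i (pt b)) then (1:ℝ) else 0)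
          = ∑ S ∈ Fi, ∑ T ∈ Fi,
              fourierCoef f S * fourierCoef f T * chi (symmDiff S T) (pt b) := by
      intro b
      rw [indicator_eq f hf i b, diff_expand, div_pow, mul_pow]
      have h2 : (2:ℝ) ^ 2 ≠ 0 := by norm_num
      rw [mul_comm ((2:ℝ) ^ 2), mul_div_assoc, div_self h2, mul_one, sq,
        Finset.sum_mul_sum]
      exact Finset.sum_congr rfl fun S _ => Finset.sum_congr rfl fun T _ => by
        rw [mul_mul_mul_comm, chi_pt_mul, mul_assoc]
    simp only [hb]
    have swap : ∑ b : Fin K → Bool, wt ρ b * (∑ S ∈ Fi, ∑ T ∈ Fi,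
        fourierCoef f S * fourierCoef f T * chi (symmDiff S T) (pt b))
      = ∑ S ∈ Fi, ∑ T ∈ Fi, ∑ b : Fin K → Bool,
          wt ρ b * (fourierCoef f S * fourierCoef f T * chi (symmDiff S T) (pt b)) := by
      simp_rw [Finset.mul_sum]
      rw [Finset.sum_comm]
      exact Finset.sum_congr rfl fun S _ => Finset.sum_comm
    rw [swap]
    refine Finset.sum_congr rfl fun S _ => Finset.sum_congr rfl fun T _ => ?_
    have := sum_wt_mul_chi ρ (fourierCoef f S * fourierCoef f T) (symmDiff S T)
    simpa [mul_assoc] using this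
  refine ⟨fun ρ _ _ => key ρ, ?_⟩
  rw [key 0]
  refine Finset.sum_congr rfl fun S hS => ?_
  rw [Finset.sum_eq_single_of_mem S hS]
  · rw [symmDiff_self]
    simp [sq]
  · intro T _ hne
    have hc : (symmDiff S T).card ≠ 0 := by
      rw [Ne, Finset.card_eq_zero, ← Finset.bot_eq_empty]
      intro h
      exact hne (symmDiff_eq_bot.mp h).symm
    rw [zero_pow hc, mul_zero]
end
end
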